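/- Assume regularity condition (H). Define the joint (vertically integrated) surplus S(p) = (1−λ)·p·(1 − F(p)) + λ·∫₀¹ min(v, p)·J·F(v)^{J−1}·f(v) dv. Then: (i) for every p ∈ (0,1), S is differentiable at p with S′(p) = (1−λ)·(1 − F(p) − p·f(p)) + λ·(1 − F(p)^J); and (ii) if p_V ∈ (0,1) satisfies D_V(p_V) = 0, then S(p) ≤ S(p_V) for all p ∈ [0,1]. (Producer surplus is maximized at the best-value managed-campaign posted price, and equals the profit of a vertically integrated platform that owns all the firms.) -/
import Mathlib


open intervalIntegral

/-- (i) The joint (vertically integrated) surplus S is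
differentiable with S′(p) = (1−λ)(1 − F(p) − p f(p)) + λ(1 − F(p)^J);
(ii) S is maximized at the best-value managed-campaign posted price p_V. -/
theorem vertical_integration_surplus
    (f F : ℝ → ℝ)
    (hf_cont : ContinuousOn f (Set.Icc 0 1))
    (hf_pos : ∀ x ∈ Set.Icc (0:ℝ) 1, 0 < f x)
    (hf_logconcave : ConcaveOn ℝ (Set.Icc 0 1) (Real.log ∘ f))
    (hf_int : (∫ t in (0:ℝ)..1, f t) = 1)
    (hF : ∀ x, F x = ∫ t in (0:ℝ)..x, f t)
    (J : ℕ) (hJ : 2 ≤ J)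
    (lam : ℝ) (hlam : lam ∈ Set.Ioo (0:ℝ) 1)
    (hreg : AntitoneOn (fun p : ℝ => 1 - F p - p * f p) (Set.Icc 0 1))
    (S : ℝ → ℝ)
    (hS : ∀ p, S p = (1 - lam) * p * (1 - F p)
        + lam * ∫ v in (0:ℝ)..1, min v p * ((J : ℝ) * F v ^ (J - 1) * f v)) :
    (∀ p ∈ Set.Ioo (0:ℝ) 1,
        HasDerivAt S ((1 - lam) * (1 - F p - p * f p) + lam * (1 - F p ^ J)) p)
    ∧ (∀ pV ∈ Set.Ioo (0:ℝ) 1,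
        (1 - lam) * (1 - F pV - pV * f pV)
          + lam * (J : ℝ) * (∫ v in pV..1, F v ^ (J - 1) * f v) = 0 →
        ∀ p ∈ Set.Icc (0:ℝ) 1, S p ≤ S pV) := by
  obtain ⟨hlam0, hlam1⟩ := hlam
  have hF_eq : F = fun x => ∫ t in (0:ℝ)..x, f t := funext hF
  have h0I : (0:ℝ) ∈ Set.Icc (0:ℝ) 1 := ⟨le_rfl, zero_le_one⟩
  have h1I : (1:ℝ) ∈ Set.Icc (0:ℝ) 1 := ⟨zero_le_one, le_rfl⟩
  set g : ℝ → ℝ := fun v => (J : ℝ) * F v ^ (J - 1) * f v with hg_def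
  have hss : ∀ a b : ℝ, a ∈ Set.Icc (0:ℝ) 1 → b ∈ Set.Icc (0:ℝ) 1 →
      Set.uIcc a b ⊆ Set.Icc (0:ℝ) 1 := fun a b ha hb => Set.uIcc_subset_Icc ha hb
  have hfint : ∀ a b : ℝ, a ∈ Set.Icc (0:ℝ) 1 → b ∈ Set.Icc (0:ℝ) 1 →
      IntervalIntegrable f MeasureTheory.volume a b :=
    fun a b ha hb => (hf_cont.mono (hss a b ha hb)).intervalIntegrable
  have huIcc : Set.uIcc (0:ℝ) 1 = Set.Icc (0:ℝ) 1 := Set.uIcc_of_le zero_le_one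
  -- continuity of a primitive
  have hprim : ∀ h : ℝ → ℝ, ContinuousOn h (Set.Icc 0 1) →
      ContinuousOn (fun p => ∫ v in (0:ℝ)..p, h v) (Set.Icc 0 1) := by
    intro h hc
    rw [← huIcc]
    exact intervalIntegral.continuousOn_primitive_interval
      (by rw [huIcc]; exact hc.integrableOn_Icc)
  have hFcont : ContinuousOn F (Set.Icc 0 1) := by
    rw [hF_eq]; exact hprim f hf_cont
  have hFderiv : ∀ x ∈ Set.Ioo (0:ℝ) 1, HasDerivAt F (f x) x := by
    intro x hx
    have hmeasf := (hf_cont.mono Set.Ioo_subset_Icc_self).stronglyMeasurableAtFilter (μ := MeasureTheory.volume) isOpen_Ioo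
    rw [hF_eq]
    exact intervalIntegral.integral_hasDerivAt_right
      (hfint 0 x h0I (Set.Ioo_subset_Icc_self hx)) (hmeasf x hx)
      (hf_cont.continuousAt (Icc_mem_nhds hx.1 hx.2))
  have hF0 : F 0 = 0 := by rw [hF]; simp
  have hF1 : F 1 = 1 := by rw [hF]; exact hf_int
  have hFnonneg : ∀ v ∈ Set.Icc (0:ℝ) 1, 0 ≤ F v := by
    intro v hv
    rw [hF]
    exact intervalIntegral.integral_nonneg hv.1
      (fun t ht => (hf_pos t ⟨ht.1, ht.2.trans hv.2⟩).le)
  have hFmono : ∀ x ∈ Set.Icc (0:ℝ) 1, ∀ y ∈ Set.Icc (0:ℝ) 1, x ≤ y → F x ≤ F y := by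
    intro x hx y hy hxy
    have hadd := intervalIntegral.integral_add_adjacent_intervals
      (hfint 0 x h0I hx) (hfint x y hx hy)
    have hnn : 0 ≤ ∫ t in x..y, f t :=
      intervalIntegral.integral_nonneg hxy
        (fun t ht => (hf_pos t ⟨hx.1.trans ht.1, ht.2.trans hy.2⟩).le)
    rw [hF x, hF y, ← hadd]; linarith
  -- facts about g
  have hg_cont : ContinuousOn g (Set.Icc 0 1) :=
    (continuousOn_const.mul (hFcont.pow _)).mul hf_cont
  have hgint : ∀ a b : ℝ, a ∈ Set.Icc (0:ℝ) 1 → b ∈ Set.Icc (0:ℝ) 1 →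
      IntervalIntegrable g MeasureTheory.volume a b :=
    fun a b ha hb => (hg_cont.mono (hss a b ha hb)).intervalIntegrable
  have hvg_cont : ContinuousOn (fun v => v * g v) (Set.Icc 0 1) :=
    continuous_id.continuousOn.mul hg_cont
  have hFTC2 : ∀ a b : ℝ, a ∈ Set.Icc (0:ℝ) 1 → b ∈ Set.Icc (0:ℝ) 1 → a ≤ b →
      (∫ v in a..b, g v) = F b ^ J - F a ^ J := by
    intro a b ha hb hab
    refine intervalIntegral.integral_eq_sub_of_hasDeriv_right_of_le hab
      ((hFcont.mono (Set.Icc_subset_Icc ha.1 hb.2)).pow J) ?_ (hgint a b ha hb)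
    intro x hx
    have hx' : x ∈ Set.Ioo (0:ℝ) 1 := ⟨lt_of_le_of_lt ha.1 hx.1, lt_of_lt_of_le hx.2 hb.2⟩
    exact (((hFderiv x hx').pow J).hasDerivWithinAt)
  set C : ℝ := ∫ v in (0:ℝ)..1, g v with hC_def
  have hΨ : ∀ p ∈ Set.Icc (0:ℝ) 1,
      (∫ v in p..1, g v) = C - ∫ v in (0:ℝ)..p, g v := by
    intro p hp
    have hadd := intervalIntegral.integral_add_adjacent_intervals
      (hgint 0 p h0I hp) (hgint p 1 hp h1I)
    rw [hC_def, ← hadd]; ring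
  have hOneSub : ∀ q ∈ Set.Icc (0:ℝ) 1, (1:ℝ) - F q ^ J = ∫ v in q..1, g v := by
    intro q hq
    rw [hFTC2 q 1 hq h1I hq.2, hF1, one_pow]
  -- rewrite S using g
  have hS' : ∀ p, S p = (1 - lam) * p * (1 - F p)
      + lam * ∫ v in (0:ℝ)..1, min v p * g v := by
    intro p; rw [hS p]
  -- the split form T
  set T : ℝ → ℝ := fun p => (1 - lam) * p * (1 - F p)
      + lam * ((∫ v in (0:ℝ)..p, v * g v) + p * (C - ∫ v in (0:ℝ)..p, g v)) with hT_def
  have hST : ∀ p ∈ Set.Icc (0:ℝ) 1, S p = T p := by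
    intro p hp
    have hming : ContinuousOn (fun v => min v p * g v) (Set.Icc 0 1) :=
      ((continuous_id.min continuous_const).continuousOn.mul hg_cont)
    have h1 : IntervalIntegrable (fun v => min v p * g v) MeasureTheory.volume 0 p :=
      (hming.mono (hss 0 p h0I hp)).intervalIntegrable
    have h2 : IntervalIntegrable (fun v => min v p * g v) MeasureTheory.volume p 1 :=
      (hming.mono (hss p 1 hp h1I)).intervalIntegrable
    have hsplit : (∫ v in (0:ℝ)..1, min v p * g v)
        = (∫ v in (0:ℝ)..p, min v p * g v) + ∫ v in p..1, min v p * g v :=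
      (intervalIntegral.integral_add_adjacent_intervals h1 h2).symm
    have e1 : (∫ v in (0:ℝ)..p, min v p * g v) = ∫ v in (0:ℝ)..p, v * g v := by
      apply intervalIntegral.integral_congr
      intro v hv
      rw [Set.uIcc_of_le hp.1] at hv
      simp [min_eq_left hv.2]
    have e2 : (∫ v in p..1, min v p * g v) = ∫ v in p..1, p * g v := by
      apply intervalIntegral.integral_congr
      intro v hv
      rw [Set.uIcc_of_le hp.2] at hv
      simp [min_eq_right hv.1]
    rw [hS' p, hT_def, hsplit, e1, e2, intervalIntegral.integral_const_mul, hΨ p hp]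
  have hTcont : ContinuousOn T (Set.Icc 0 1) := by
    rw [hT_def]
    exact ((continuousOn_const.mul continuous_id.continuousOn).mul
        (continuousOn_const.sub hFcont)).add
      (continuousOn_const.mul ((hprim _ hvg_cont).add
        (continuous_id.continuousOn.mul (continuousOn_const.sub (hprim _ hg_cont)))))
  have hScont : ContinuousOn S (Set.Icc 0 1) :=
    hTcont.congr (fun x hx => hST x hx)
  -- derivative of T
  have hTderiv : ∀ p ∈ Set.Ioo (0:ℝ) 1,
      HasDerivAt T ((1 - lam) * (1 - F p - p * f p) + lam * (1 - F p ^ J)) p := by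
    intro p hp
    have hpI : p ∈ Set.Icc (0:ℝ) 1 := Set.Ioo_subset_Icc_self hp
    have hmeasg := (hg_cont.mono Set.Ioo_subset_Icc_self).stronglyMeasurableAtFilter (μ := MeasureTheory.volume) isOpen_Ioo
    have hmeasvg := (hvg_cont.mono Set.Ioo_subset_Icc_self).stronglyMeasurableAtFilter (μ := MeasureTheory.volume) isOpen_Ioo
    have hgcp : ContinuousAt g p := hg_cont.continuousAt (Icc_mem_nhds hp.1 hp.2)
    have hΦ : HasDerivAt (fun q => ∫ v in (0:ℝ)..q, v * g v) (p * g p) p :=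
      intervalIntegral.integral_hasDerivAt_right
        ((hvg_cont.mono (hss 0 p h0I hpI)).intervalIntegrable) (hmeasvg p hp)
        (continuousAt_id.mul hgcp)
    have hI : HasDerivAt (fun q => ∫ v in (0:ℝ)..q, g v) (g p) p :=
      intervalIntegral.integral_hasDerivAt_right (hgint 0 p h0I hpI) (hmeasg p hp) hgcp
    have hd1 : HasDerivAt (fun q => (1 - lam) * q * (1 - F q))
        ((1 - lam) * 1 * (1 - F p) + (1 - lam) * p * (0 - f p)) p :=
      (((hasDerivAt_id p).const_mul (1 - lam)).mul
        ((hasDerivAt_const p (1:ℝ)).sub (hFderiv p hp)))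
    have hd2 : HasDerivAt
        (fun q => (∫ v in (0:ℝ)..q, v * g v) + q * (C - ∫ v in (0:ℝ)..q, g v))
        (p * g p + (1 * (C - ∫ v in (0:ℝ)..p, g v) + p * (0 - g p))) p :=
      hΦ.add ((hasDerivAt_id p).mul ((hasDerivAt_const p C).sub hI))
    have hd : HasDerivAt T
        ((1 - lam) * 1 * (1 - F p) + (1 - lam) * p * (0 - f p)
          + lam * (p * g p + (1 * (C - ∫ v in (0:ℝ)..p, g v) + p * (0 - g p)))) p :=
      hd1.add (hd2.const_mul lam)
    have hCp : C - (∫ v in (0:ℝ)..p, g v) = 1 - F p ^ J := by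
      rw [← hΨ p hpI, hFTC2 p 1 hpI h1I hp.2.le, hF1, one_pow]
    rw [hCp] at hd
    convert hd using 1
    ring
  have hSderiv : ∀ p ∈ Set.Ioo (0:ℝ) 1,
      HasDerivAt S ((1 - lam) * (1 - F p - p * f p) + lam * (1 - F p ^ J)) p := by
    intro p hp
    refine (hTderiv p hp).congr_of_eventuallyEq ?_
    filter_upwards [Ioo_mem_nhds hp.1 hp.2] with x hx
    exact hST x (Set.Ioo_subset_Icc_self hx)
  refine ⟨hSderiv, ?_⟩
  -- part (ii)
  intro pV hpV hFOC p hp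
  have hpVI : pV ∈ Set.Icc (0:ℝ) 1 := Set.Ioo_subset_Icc_self hpV
  set D : ℝ → ℝ := fun q => (1 - lam) * (1 - F q - q * f q) + lam * (1 - F q ^ J) with hD_def
  have hgJ : (∫ v in pV..1, g v) = (J : ℝ) * ∫ v in pV..1, F v ^ (J - 1) * f v := by
    rw [← intervalIntegral.integral_const_mul]
    simp only [hg_def, mul_assoc]
  have hDpV : D pV = 0 := by
    rw [hD_def]
    simp only
    rw [hOneSub pV hpVI, hgJ]
    ring_nf
    ring_nf at hFOC
    linarith
  have hDanti : AntitoneOn D (Set.Icc (0:ℝ) 1) := by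
    intro x hx y hy hxy
    have h1 := hreg hx hy hxy
    simp only at h1
    have h2 : F x ^ J ≤ F y ^ J := pow_le_pow_left₀ (hFnonneg x hx) (hFmono x hx y hy hxy) J
    have h3 := mul_le_mul_of_nonneg_left h1 (by linarith : (0:ℝ) ≤ 1 - lam)
    have h4 := mul_le_mul_of_nonneg_left (by linarith : 1 - F y ^ J ≤ 1 - F x ^ J) hlam0.le
    rw [hD_def]
    simp only
    linarith
  have hmono : MonotoneOn S (Set.Icc 0 pV) := by
    apply monotoneOn_of_deriv_nonneg (convex_Icc 0 pV)
      (hScont.mono (Set.Icc_subset_Icc le_rfl hpV.2.le))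
    · intro x hx
      rw [interior_Icc] at hx
      have hx' : x ∈ Set.Ioo (0:ℝ) 1 := ⟨hx.1, hx.2.trans hpV.2⟩
      exact (hSderiv x hx').differentiableAt.differentiableWithinAt
    · intro x hx
      rw [interior_Icc] at hx
      have hx' : x ∈ Set.Ioo (0:ℝ) 1 := ⟨hx.1, hx.2.trans hpV.2⟩
      rw [(hSderiv x hx').deriv]
      have hle := hDanti (Set.Ioo_subset_Icc_self hx') hpVI hx.2.le
      rw [hDpV] at hle
      simpa [hD_def] using hle
  have hanti : AntitoneOn S (Set.Icc pV 1) := by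
    apply antitoneOn_of_deriv_nonpos (convex_Icc pV 1)
      (hScont.mono (Set.Icc_subset_Icc hpV.1.le le_rfl))
    · intro x hx
      rw [interior_Icc] at hx
      have hx' : x ∈ Set.Ioo (0:ℝ) 1 := ⟨hpV.1.trans hx.1, hx.2⟩
      exact (hSderiv x hx').differentiableAt.differentiableWithinAt
    · intro x hx
      rw [interior_Icc] at hx
      have hx' : x ∈ Set.Ioo (0:ℝ) 1 := ⟨hpV.1.trans hx.1, hx.2⟩
      rw [(hSderiv x hx').deriv]
      have hle := hDanti hpVI (Set.Ioo_subset_Icc_self hx') hx.1.le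
      rw [hDpV] at hle
      simpa [hD_def] using hle
  rcases le_total p pV with h | h
  · exact hmono ⟨hp.1, h⟩ ⟨hpV.1.le, le_rfl⟩ h
  · exact hanti ⟨le_rfl, hpV.2.le⟩ ⟨h, hp.2⟩ h
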